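/- Let M(x, y) be a polynomial in two variables of total degree at most n in each variable, and suppose the reciprocity relation y^n · M_{−}(xy, 1/y) = M(x, y) holds, where M_{−} denotes M with a parameter m replaced by −m, and suppose F(x, y) = y^n · M((1+y)/(y−x), (y−x)/y). Then F satisfies F(x, y) = (1+x)^n · F_{−}(−x/(1+x), (y−x)/(1+x)), where F_{−} is F with m replaced by −m. -/

import Mathlib

theorem M_reciprocity_implies_F_reciprocity
    (n : ℕ) (M F : ℚ → ℚ → ℚ → ℚ)
    (hrec : ∀ m x y : ℚ, y ≠ 0 → y ^ n * M (-m) (x * y) (1 / y) = M m x y)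
    (hF : ∀ m x y : ℚ, y - x ≠ 0 → y ≠ 0 →
      F m x y = y ^ n * M m ((1 + y) / (y - x)) ((y - x) / y))
    (m x y : ℚ) (hyx : y ≠ x) (hy : y ≠ 0) (hx : 1 + x ≠ 0) :
    F m x y = (1 + x) ^ n * F (-m) (-x / (1 + x)) ((y - x) / (1 + x)) := by
  have hyx' : y - x ≠ 0 := sub_ne_zero.mpr hyx
  have h1 : (y - x) / (1 + x) - -x / (1 + x) = y / (1 + x) := by
    field_simp; ring
  rw [hF m x y hyx' hy,
      hF (-m) (-x / (1 + x)) ((y - x) / (1 + x))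
        (by rw [h1]; exact div_ne_zero hy hx) (div_ne_zero hyx' hx),
      ← hrec m ((1 + y) / (y - x)) ((y - x) / y) (div_ne_zero hyx' hy)]
  have A1 : (1 + y) / (y - x) * ((y - x) / y) = (1 + y) / y := by
    field_simp
  have A2 : (1 : ℚ) / ((y - x) / y) = y / (y - x) := one_div_div _ _
  have B1 : (1 + (y - x) / (1 + x)) / ((y - x) / (1 + x) - -x / (1 + x)) = (1 + y) / y := by
    rw [h1]; field_simp; ring
  have B2 : ((y - x) / (1 + x) - -x / (1 + x)) / ((y - x) / (1 + x)) = y / (y - x) := by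
    rw [h1]; field_simp
  rw [A1, A2, B1, B2, ← mul_assoc, ← mul_assoc, ← mul_pow, ← mul_pow,
      mul_div_cancel₀ _ hy, mul_div_cancel₀ _ hx]
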